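/- Let L and N be positive integers and let λ_1,…,λ_N be complex numbers such that λ_k + i ≠ 0 for every k and λ_k − λ_l − i ≠ 0 for all k ≠ l. If the Bethe equations ((λ_k − i)/(λ_k + i))^L = ∏_{l≠k} (λ_k − λ_l + i)/(λ_k − λ_l − i) hold for every k = 1,…,N, then every λ_k is real (has zero imaginary part). -/

import Mathlib

open Complex Finset

lemma sq_abs_sub_bethe (w : ℂ) :
    ‖w + I‖ ^ 2 - ‖w - I‖ ^ 2 = 4 * w.im := by
  rw [Complex.sq_norm, Complex.sq_norm, Complex.normSq_apply, Complex.normSq_apply]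
  simp [Complex.add_im, Complex.sub_im, Complex.add_re, Complex.sub_re]
  ring

lemma abs_le_of_im_nonneg (w : ℂ) (h : 0 ≤ w.im) :
    ‖w - I‖ ≤ ‖w + I‖ := by
  have h2 : ‖w - I‖ ^ 2 ≤ ‖w + I‖ ^ 2 := by
    nlinarith [sq_abs_sub_bethe w]
  exact (pow_le_pow_iff_left₀ (norm_nonneg _) (norm_nonneg _) two_ne_zero).mp h2

lemma abs_lt_of_im_pos (w : ℂ) (h : 0 < w.im) :
    ‖w - I‖ < ‖w + I‖ := by
  have h2 : ‖w - I‖ ^ 2 < ‖w + I‖ ^ 2 := by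
    nlinarith [sq_abs_sub_bethe w]
  exact (pow_lt_pow_iff_left₀ (norm_nonneg _) (norm_nonneg _) two_ne_zero).mp h2

/-- For the spin `s = -1` Bethe equations, all Bethe roots are real. -/
theorem bethe_roots_real (L N : ℕ) (hL : 0 < L) (hN : 0 < N) (lam : Fin N → ℂ)
    (h1 : ∀ k, lam k + I ≠ 0)
    (h2 : ∀ k l, k ≠ l → lam k - lam l - I ≠ 0)
    (hbethe : ∀ k, ((lam k - I) / (lam k + I)) ^ L =
      ∏ l ∈ Finset.univ.erase k, (lam k - lam l + I) / (lam k - lam l - I)) :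
    ∀ k, (lam k).im = 0 := by
  haveI : Nonempty (Fin N) := ⟨⟨0, hN⟩⟩
  obtain ⟨k₀, -, hk₀⟩ := Finset.exists_max_image Finset.univ (fun k => (lam k).im)
    univ_nonempty
  obtain ⟨k₁, -, hk₁⟩ := Finset.exists_min_image Finset.univ (fun k => (lam k).im)
    univ_nonempty
  have habs : ∀ k, ‖(lam k - I) / (lam k + I)‖ ^ L =
      ∏ l ∈ Finset.univ.erase k,
        ‖lam k - lam l + I‖ / ‖lam k - lam l - I‖ := by
    intro k
    have := congrArg (‖·‖) (hbethe k)
    rw [norm_pow, norm_prod] at this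
    simpa [norm_div] using this
  -- max imaginary part is ≤ 0
  have hmax : (lam k₀).im ≤ 0 := by
    by_contra hpos
    push_neg at hpos
    have hlt : ‖lam k₀ - I‖ < ‖lam k₀ + I‖ :=
      abs_lt_of_im_pos _ hpos
    have hdpos : 0 < ‖lam k₀ + I‖ := norm_pos_iff.mpr (h1 k₀)
    have hLHS : ‖(lam k₀ - I) / (lam k₀ + I)‖ ^ L < 1 := by
      rw [norm_div]
      exact pow_lt_one₀ (div_nonneg (norm_nonneg _) (norm_nonneg _))
        ((div_lt_one hdpos).mpr hlt) hL.ne'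
    have hRHS : (1 : ℝ) ≤ ∏ l ∈ Finset.univ.erase k₀,
        ‖lam k₀ - lam l + I‖ / ‖lam k₀ - lam l - I‖ := by
      calc (1:ℝ) = ∏ _l ∈ Finset.univ.erase k₀, (1:ℝ) := by simp
        _ ≤ _ := Finset.prod_le_prod (fun l _ => zero_le_one) ?_
      intro l hl
      have hne : k₀ ≠ l := (Finset.ne_of_mem_erase hl).symm
      have hd : 0 < ‖lam k₀ - lam l - I‖ := norm_pos_iff.mpr (h2 k₀ l hne)
      have him : 0 ≤ (lam k₀ - lam l).im := by
        have := hk₀ l (mem_univ l)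
        simp only [Complex.sub_im]
        linarith
      exact (one_le_div hd).mpr (abs_le_of_im_nonneg _ him)
    rw [habs k₀] at hLHS
    linarith
  -- min imaginary part is ≥ 0
  have hmin : 0 ≤ (lam k₁).im := by
    by_contra hneg
    push_neg at hneg
    have hlt : ‖lam k₁ + I‖ < ‖lam k₁ - I‖ := by
      have h2' : ‖lam k₁ + I‖ ^ 2 < ‖lam k₁ - I‖ ^ 2 := by
        nlinarith [sq_abs_sub_bethe (lam k₁)]
      exact (pow_lt_pow_iff_left₀ (norm_nonneg _) (norm_nonneg _)
        two_ne_zero).mp h2'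
    have hdpos : 0 < ‖lam k₁ + I‖ := norm_pos_iff.mpr (h1 k₁)
    have hLHS : 1 < ‖(lam k₁ - I) / (lam k₁ + I)‖ ^ L := by
      rw [norm_div]
      exact one_lt_pow₀ ((one_lt_div hdpos).mpr hlt) hL.ne'
    have hRHS : ∏ l ∈ Finset.univ.erase k₁,
        ‖lam k₁ - lam l + I‖ / ‖lam k₁ - lam l - I‖ ≤ 1 := by
      apply Finset.prod_le_one
      · intro l hl
        exact div_nonneg (norm_nonneg _) (norm_nonneg _)
      · intro l hl
        have hne : k₁ ≠ l := (Finset.ne_of_mem_erase hl).symm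
        have hd : 0 < ‖lam k₁ - lam l - I‖ := norm_pos_iff.mpr (h2 k₁ l hne)
        have him : (lam k₁ - lam l).im ≤ 0 := by
          have := hk₁ l (mem_univ l)
          simp only [Complex.sub_im]
          linarith
        have hle : ‖lam k₁ - lam l + I‖ ≤ ‖lam k₁ - lam l - I‖ := by
          have h2' : ‖lam k₁ - lam l + I‖ ^ 2 ≤
              ‖lam k₁ - lam l - I‖ ^ 2 := by
            nlinarith [sq_abs_sub_bethe (lam k₁ - lam l)]
          exact (pow_le_pow_iff_left₀ (norm_nonneg _) (norm_nonneg _)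
            two_ne_zero).mp h2'
        exact (div_le_one hd).mpr hle
    rw [habs k₁] at hLHS
    linarith
  intro k
  have h1' := hk₀ k (mem_univ k)
  have h2' := hk₁ k (mem_univ k)
  linarith
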